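/- Let G be a finite simple graph with at least one edge, clique number ω(G) = ω, and let r ≥ 1 be an integer. If ω > 2 and G is the disjoint union of a regular complete ω-partite graph and possibly some isolated vertices, then λ₁(G)^r = Σ_{v ∈ V(G)} w_r(v)·(c_G(v) − 1)/c_G(v). Likewise, if ω = 2 and G is the disjoint union of a complete bipartite graph and possibly some isolated vertices, where the complete bipartite component is additionally regular when r is odd, then the same equality holds. -/

import Mathlib

/-- The spectral radius of a real matrix, defined as the supremum of its real
spectrum (the largest real eigenvalue; for symmetric or nonnegative matrices
this is the spectral radius). -/
noncomputable def lam1 {n : Type*} [Fintype n] [DecidableEq n] (A : Matrix n n ℝ) : ℝ :=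
  sSup (spectrum ℝ A)

/-- `localCliqueNum G v` is the maximum size of a clique of `G` containing `v`. -/
noncomputable def localCliqueNum {V : Type*} (G : SimpleGraph V) (v : V) : ℕ :=
  sSup {k | ∃ s : Finset V, G.IsNClique k s ∧ v ∈ s}

/-- `walkCount G r v` is the number of walks with `r` vertices starting at `v`,
i.e. `(A(G)^(r-1) · 𝟏)_v`. -/
noncomputable def walkCount {V : Type*} [Fintype V] [DecidableEq V] (G : SimpleGraph V)
    [DecidableRel G.Adj] (r : ℕ) (v : V) : ℝ :=
  Matrix.mulVec ((G.adjMatrix ℝ) ^ (r - 1)) (fun _ => 1) v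

/-- The clique number of `G`: the maximum size of a clique of `G`. -/
noncomputable def cliqueNumber {V : Type*} (G : SimpleGraph V) : ℕ :=
  sSup {k | ∃ s : Finset V, G.IsNClique k s}

/-- `G` is the disjoint union of a regular complete `k`-partite graph (on the vertex set
`W`, whose parts are the fibers of the coloring `f` and all have the same size `t > 0`)
together with some isolated vertices (the vertices outside `W`). -/
def IsRegularCompleteMultipartitePlusIsolated {V : Type*} [DecidableEq V]
    (G : SimpleGraph V) (k : ℕ) : Prop :=
  ∃ (W : Finset V) (t : ℕ) (f : V → Fin k),
    0 < t ∧
    (∀ v ∈ W, ∃ u, G.Adj v u) ∧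
    (∀ u v, G.Adj u v ↔ (u ∈ W ∧ v ∈ W ∧ f u ≠ f v)) ∧
    (∀ i : Fin k, (W.filter fun v => f v = i).card = t)

/-- `G` is the disjoint union of the complete bipartite graph with (nonempty) parts
`A` and `B` together with some isolated vertices (the vertices outside `A ∪ B`). -/
def IsCompleteBipartitePlusIsolated {V : Type*} [DecidableEq V]
    (G : SimpleGraph V) (A B : Finset V) : Prop :=
  A.Nonempty ∧ B.Nonempty ∧ Disjoint A B ∧
  (∀ u v, G.Adj u v ↔ ((u ∈ A ∧ v ∈ B) ∨ (u ∈ B ∧ v ∈ A)))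

open Matrix Finset

section SpectralAux

lemma spectrum_iff' {n : Type*} [Fintype n] [DecidableEq n] (M : Matrix n n ℝ) (μ : ℝ) :
    μ ∈ spectrum ℝ M ↔ ∃ x : n → ℝ, x ≠ 0 ∧ M.mulVec x = μ • x := by
  rw [spectrum.mem_iff, Matrix.isUnit_iff_isUnit_det, isUnit_iff_ne_zero, not_ne_iff,
    ← Matrix.exists_mulVec_eq_zero_iff]
  have key : ∀ x : n → ℝ, ((algebraMap ℝ (Matrix n n ℝ)) μ - M) *ᵥ x = μ • x - M *ᵥ x := by
    intro x
    ext i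
    simp [Matrix.mulVec, dotProduct, Matrix.sub_apply, Matrix.algebraMap_matrix_apply,
      sub_mul, Finset.sum_sub_distrib, ite_mul, Finset.sum_ite_eq]
  constructor
  · rintro ⟨x, hx, h⟩
    exact ⟨x, hx, by rw [key, sub_eq_zero] at h; exact h.symm⟩
  · rintro ⟨x, hx, h⟩
    exact ⟨x, hx, by rw [key, h, sub_self]⟩

lemma eig_abs_le {n : Type*} [Fintype n] (M : Matrix n n ℝ) (C : ℝ)
    (hM : ∀ i j, 0 ≤ M i j) (hC : ∀ i, ∑ j, M i j ≤ C)
    {x : n → ℝ} (hx : x ≠ 0) {ν : ℝ} (h : M.mulVec x = ν • x) : |ν| ≤ C := by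
  have hne : Nonempty n := by
    by_contra hempty
    exact hx (funext fun i => absurd ⟨i⟩ hempty)
  obtain ⟨i, -, hi⟩ := Finset.exists_max_image Finset.univ (fun j => |x j|) univ_nonempty
  have hxi : 0 < |x i| := by
    obtain ⟨j, hj⟩ := Function.ne_iff.mp hx
    exact lt_of_lt_of_le (abs_pos.mpr hj) (hi j (mem_univ j))
  have key : |ν| * |x i| ≤ C * |x i| := by
    have h1 : |ν * x i| = |(M.mulVec x) i| := by rw [h]; simp [abs_mul]
    calc |ν| * |x i| = |ν * x i| := (abs_mul ν (x i)).symm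
      _ = |∑ j, M i j * x j| := by rw [h1]; rfl
      _ ≤ ∑ j, |M i j * x j| := Finset.abs_sum_le_sum_abs _ _
      _ ≤ ∑ j, M i j * |x i| := by
          refine Finset.sum_le_sum fun j _ => ?_
          rw [abs_mul, abs_of_nonneg (hM i j)]
          exact mul_le_mul_of_nonneg_left (hi j (mem_univ j)) (hM i j)
      _ = (∑ j, M i j) * |x i| := by rw [Finset.sum_mul]
      _ ≤ C * |x i| := mul_le_mul_of_nonneg_right (hC i) hxi.le
  exact le_of_mul_le_mul_right key hxi

end SpectralAux

section CliqueAux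

variable {V : Type*} [Fintype V] (G : SimpleGraph V)

lemma clique_bdd : BddAbove {k | ∃ s : Finset V, G.IsNClique k s} :=
  ⟨Fintype.card V, fun _ ⟨s, hs⟩ => hs.card_eq ▸ Finset.card_le_univ s⟩

lemma local_bdd (v : V) : BddAbove {k | ∃ s : Finset V, G.IsNClique k s ∧ v ∈ s} :=
  ⟨Fintype.card V, fun _ ⟨s, hs, _⟩ => hs.card_eq ▸ Finset.card_le_univ s⟩

lemma singleton_mem_cliqueSet (v : V) :
    1 ∈ {k | ∃ s : Finset V, G.IsNClique k s ∧ v ∈ s} :=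
  ⟨{v}, ⟨by simp [SimpleGraph.isClique_singleton], by simp⟩, by simp⟩

lemma local_le_clique (v : V) : localCliqueNum G v ≤ cliqueNumber G :=
  csSup_le_csSup (clique_bdd G) ⟨1, singleton_mem_cliqueSet G v⟩ (fun _ ⟨s, hs, _⟩ => ⟨s, hs⟩)

lemma local_ge {v : V} {n : ℕ} {s : Finset V}
    (hs : G.IsNClique n s) (hv : v ∈ s) : n ≤ localCliqueNum G v :=
  le_csSup (local_bdd G v) ⟨s, hs, hv⟩

lemma local_isolated {v : V} (hiso : ∀ u, ¬G.Adj v u) : localCliqueNum G v = 1 := by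
  refine IsGreatest.csSup_eq ⟨singleton_mem_cliqueSet G v, ?_⟩
  rintro n ⟨s, hs, hv⟩
  by_contra hn
  push_neg at hn
  have h1 : 1 < s.card := hs.card_eq ▸ hn
  obtain ⟨u, hu, hne⟩ := Finset.exists_mem_ne h1 v
  exact hiso u ((hs.isClique hv hu (Ne.symm hne)))

end CliqueAux

section Multi

variable {V : Type*} [Fintype V] [DecidableEq V] (G : SimpleGraph V) [DecidableRel G.Adj]
  (W : Finset V) {k : ℕ} (t : ℕ) (f : V → Fin k)
  (hadj : ∀ u v, G.Adj u v ↔ (u ∈ W ∧ v ∈ W ∧ f u ≠ f v))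
  (hcard : ∀ i : Fin k, (W.filter fun v => f v = i).card = t)

include hadj hcard

lemma multi_W_card : W.card = k * t := by
  have h := Finset.card_eq_sum_card_fiberwise
    (s := W) (t := (univ : Finset (Fin k))) (f := f) (fun x _ => mem_univ _)
  simpa [hcard, mul_comm] using h

lemma multi_nbW {v : V} (hv : v ∈ W) :
    G.neighborFinset v = W.filter (fun u => f u ≠ f v) := by
  ext u
  simp only [SimpleGraph.mem_neighborFinset, hadj, mem_filter]
  constructor
  · rintro ⟨-, hu, hne⟩; exact ⟨hu, hne.symm⟩
  · rintro ⟨hu, hne⟩; exact ⟨hv, hu, hne.symm⟩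

lemma multi_nb0 {v : V} (hv : v ∉ W) : G.neighborFinset v = ∅ := by
  ext u
  simp only [SimpleGraph.mem_neighborFinset, hadj, Finset.notMem_empty, iff_false]
  rintro ⟨h, -, -⟩; exact hv h

lemma multi_nbW_card (hk : 1 ≤ k) {v : V} (hv : v ∈ W) :
    ((G.neighborFinset v).card : ℝ) = ((k : ℝ) - 1) * t := by
  have h1 := Finset.card_filter_add_card_filter_not
    (s := W) (p := fun u => f u = f v)
  rw [multi_nbW G W t f hadj hcard hv]
  have h2 : (W.filter fun u => f u = f v).card = t := hcard (f v)
  have h3 : W.card = k * t := multi_W_card G W t f hadj hcard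
  have h4 : (W.filter fun u => ¬ f u = f v).card = k * t - t := by omega
  have h5 : t ≤ k * t := Nat.le_mul_of_pos_left t (by omega)
  have h6 : (W.filter fun u => f u ≠ f v).card = k*t - t := h4
  rw [h6, Nat.cast_sub h5]
  push_cast
  ring

lemma multi_walk (hk : 1 ≤ k) (m : ℕ) :
    ((G.adjMatrix ℝ) ^ m).mulVec (fun _ => 1) =
      fun v => if v ∈ W then (((k : ℝ) - 1) * t) ^ m else if m = 0 then 1 else 0 := by
  induction m with
  | zero => funext v; simp [Matrix.one_mulVec]
  | succ m ih =>
    rw [pow_succ', ← Matrix.mulVec_mulVec, ih]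
    funext v
    rw [SimpleGraph.adjMatrix_mulVec_apply]
    by_cases hv : v ∈ W
    · rw [multi_nbW G W t f hadj hcard hv]
      have hconst : ∀ u ∈ W.filter (fun u => f u ≠ f v),
          (fun u => if u ∈ W then (((k : ℝ) - 1) * t) ^ m else if m = 0 then 1 else 0) u
            = (((k : ℝ) - 1) * t) ^ m := by
        intro u hu
        simp [(Finset.mem_filter.mp hu).1]
      rw [Finset.sum_congr rfl hconst, Finset.sum_const, nsmul_eq_mul]
      have hc : ((W.filter (fun u => f u ≠ f v)).card : ℝ) = ((k : ℝ) - 1) * t := by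
        rw [← multi_nbW G W t f hadj hcard hv]
        exact multi_nbW_card G W t f hadj hcard hk hv
      rw [hc]
      simp [hv, pow_succ]
      ring
    · rw [multi_nb0 G W t f hadj hcard hv]
      simp [hv]

lemma multi_eigen (hk : 1 ≤ k) :
    (G.adjMatrix ℝ).mulVec (fun v => if v ∈ W then (1:ℝ) else 0) =
      (((k : ℝ) - 1) * t) • (fun v => if v ∈ W then (1:ℝ) else 0) := by
  funext v
  rw [SimpleGraph.adjMatrix_mulVec_apply]
  by_cases hv : v ∈ W
  · rw [multi_nbW G W t f hadj hcard hv]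
    have hconst : ∀ u ∈ W.filter (fun u => f u ≠ f v),
        (if u ∈ W then (1:ℝ) else 0) = 1 := by
      intro u hu; simp [(Finset.mem_filter.mp hu).1]
    rw [Finset.sum_congr rfl hconst, Finset.sum_const, nsmul_eq_mul, mul_one]
    have hc : ((W.filter (fun u => f u ≠ f v)).card : ℝ) = ((k : ℝ) - 1) * t := by
      rw [← multi_nbW G W t f hadj hcard hv]
      exact multi_nbW_card G W t f hadj hcard hk hv
    simp [hc, hv]
  · rw [multi_nb0 G W t f hadj hcard hv]
    simp [hv]

lemma multi_clique (ht : 0 < t) {v : V} (hv : v ∈ W) :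
    ∃ s : Finset V, G.IsNClique k s ∧ v ∈ s := by
  have hex : ∀ i : Fin k, ∃ u, u ∈ W ∧ f u = i := by
    intro i
    have hpos : 0 < (W.filter fun u => f u = i).card := by rw [hcard]; exact ht
    obtain ⟨u, hu⟩ := Finset.card_pos.mp hpos
    exact ⟨u, (Finset.mem_filter.mp hu).1, (Finset.mem_filter.mp hu).2⟩
  choose g0 hg0W hg0f using hex
  set g : Fin k → V := fun i => if i = f v then v else g0 i with hg
  have hgW : ∀ i, g i ∈ W := by
    intro i; by_cases h : i = f v <;> simp [hg, h, hv, hg0W]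
  have hgf : ∀ i, f (g i) = i := by
    intro i; by_cases h : i = f v <;> simp [hg, h, hg0f]
  have hginj : Function.Injective g := fun i j hij => by rw [← hgf i, ← hgf j, hij]
  refine ⟨Finset.image g Finset.univ, ⟨?_, ?_⟩, ?_⟩
  · intro a ha b hb hne
    simp only [Finset.coe_image, Set.mem_image, Finset.coe_univ, Set.image_univ,
      Set.mem_range] at ha hb
    obtain ⟨i, rfl⟩ := ha
    obtain ⟨j, rfl⟩ := hb
    refine (hadj _ _).mpr ⟨hgW i, hgW j, ?_⟩
    rw [hgf, hgf]
    exact fun hij => hne (by rw [hij])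
  · rw [Finset.card_image_of_injective _ hginj, Finset.card_univ, Fintype.card_fin]
  · exact Finset.mem_image.mpr ⟨f v, Finset.mem_univ _, by simp [hg]⟩

end Multi

section Bip

variable {V : Type*} [Fintype V] [DecidableEq V] (G : SimpleGraph V) [DecidableRel G.Adj]
  (A B : Finset V)
  (hAB : Disjoint A B)
  (hadj : ∀ u v, G.Adj u v ↔ ((u ∈ A ∧ v ∈ B) ∨ (u ∈ B ∧ v ∈ A)))

include hAB hadj

lemma bip_nbA {v : V} (hv : v ∈ A) : G.neighborFinset v = B := by
  ext u
  simp only [SimpleGraph.mem_neighborFinset, hadj]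
  have hvB : v ∉ B := Finset.disjoint_left.mp hAB hv
  constructor
  · rintro (⟨-, hu⟩ | ⟨hvb, -⟩); exact hu; exact absurd hvb hvB
  · intro hu; exact Or.inl ⟨hv, hu⟩

lemma bip_nbB {v : V} (hv : v ∈ B) : G.neighborFinset v = A := by
  ext u
  simp only [SimpleGraph.mem_neighborFinset, hadj]
  have hvA : v ∉ A := Finset.disjoint_right.mp hAB hv
  constructor
  · rintro (⟨hva, -⟩ | ⟨-, hu⟩); exact absurd hva hvA; exact hu
  · intro hu; exact Or.inr ⟨hv, hu⟩

lemma bip_nb0 {v : V} (hvA : v ∉ A) (hvB : v ∉ B) : G.neighborFinset v = ∅ := by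
  ext u
  simp only [SimpleGraph.mem_neighborFinset, hadj, Finset.notMem_empty, iff_false]
  rintro (⟨hva, -⟩ | ⟨hvb, -⟩); exact hvA hva; exact hvB hvb

lemma bip_walk (m : ℕ) :
    ((G.adjMatrix ℝ) ^ m).mulVec (fun _ => 1) =
      fun v => if v ∈ A then (A.card : ℝ) ^ (m / 2) * (B.card : ℝ) ^ ((m + 1) / 2)
        else if v ∈ B then (A.card : ℝ) ^ ((m + 1) / 2) * (B.card : ℝ) ^ (m / 2)
        else if m = 0 then 1 else 0 := by
  induction m with
  | zero => funext v; simp [Matrix.one_mulVec]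
  | succ m ih =>
    rw [pow_succ', ← Matrix.mulVec_mulVec, ih]
    funext v
    rw [SimpleGraph.adjMatrix_mulVec_apply]
    have hdiv : (m + 1 + 1) / 2 = m / 2 + 1 := by omega
    by_cases hvA : v ∈ A
    · have hvB : v ∉ B := Finset.disjoint_left.mp hAB hvA
      rw [bip_nbA G A B hAB hadj hvA]
      have hconst : ∀ u ∈ B,
          (if u ∈ A then (A.card : ℝ) ^ (m / 2) * (B.card : ℝ) ^ ((m + 1) / 2)
            else if u ∈ B then (A.card : ℝ) ^ ((m + 1) / 2) * (B.card : ℝ) ^ (m / 2)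
            else if m = 0 then 1 else 0)
            = (A.card : ℝ) ^ ((m + 1) / 2) * (B.card : ℝ) ^ (m / 2) := by
        intro u hu
        have huA : u ∉ A := Finset.disjoint_right.mp hAB hu
        simp [huA, hu]
      rw [Finset.sum_congr rfl hconst, Finset.sum_const, nsmul_eq_mul]
      simp only [hvA, if_true, hdiv]
      rw [pow_succ]
      ring
    · by_cases hvB : v ∈ B
      · rw [bip_nbB G A B hAB hadj hvB]
        have hconst : ∀ u ∈ A,
            (if u ∈ A then (A.card : ℝ) ^ (m / 2) * (B.card : ℝ) ^ ((m + 1) / 2)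
              else if u ∈ B then (A.card : ℝ) ^ ((m + 1) / 2) * (B.card : ℝ) ^ (m / 2)
              else if m = 0 then 1 else 0)
              = (A.card : ℝ) ^ (m / 2) * (B.card : ℝ) ^ ((m + 1) / 2) := by
          intro u hu; simp [hu]
        rw [Finset.sum_congr rfl hconst, Finset.sum_const, nsmul_eq_mul]
        simp only [hvA, hvB, if_false, if_true, hdiv]
        rw [pow_succ]
        ring
      · rw [bip_nb0 G A B hAB hadj hvA hvB]
        simp [hvA, hvB]

lemma bip_eigen :
    (G.adjMatrix ℝ).mulVec
        (fun v => if v ∈ A then Real.sqrt (B.card) else if v ∈ B then Real.sqrt (A.card) else 0) =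
      Real.sqrt ((A.card : ℝ) * B.card) •
        (fun v => if v ∈ A then Real.sqrt (B.card) else if v ∈ B then Real.sqrt (A.card) else 0) := by
  funext v
  rw [SimpleGraph.adjMatrix_mulVec_apply]
  have hsq : Real.sqrt ((A.card : ℝ) * B.card) = Real.sqrt A.card * Real.sqrt B.card :=
    Real.sqrt_mul (by positivity) _
  by_cases hvA : v ∈ A
  · have hvB : v ∉ B := Finset.disjoint_left.mp hAB hvA
    rw [bip_nbA G A B hAB hadj hvA]
    have hconst : ∀ u ∈ B,
        (if u ∈ A then Real.sqrt (B.card) else if u ∈ B then Real.sqrt (A.card) else 0)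
          = Real.sqrt (A.card) := by
      intro u hu
      have huA : u ∉ A := Finset.disjoint_right.mp hAB hu
      simp [huA, hu]
    rw [Finset.sum_congr rfl hconst, Finset.sum_const, nsmul_eq_mul]
    simp only [Pi.smul_apply, hvA, if_true, smul_eq_mul, hsq]
    rw [mul_assoc, Real.mul_self_sqrt (by positivity : (0:ℝ) ≤ (B.card:ℝ))]
    ring
  · by_cases hvB : v ∈ B
    · rw [bip_nbB G A B hAB hadj hvB]
      have hconst : ∀ u ∈ A,
          (if u ∈ A then Real.sqrt (B.card) else if u ∈ B then Real.sqrt (A.card) else 0)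
            = Real.sqrt (B.card) := by
        intro u hu; simp [hu]
      rw [Finset.sum_congr rfl hconst, Finset.sum_const, nsmul_eq_mul]
      simp only [Pi.smul_apply, hvA, hvB, if_false, if_true, smul_eq_mul, hsq]
      rw [mul_comm (Real.sqrt (A.card:ℝ)) (Real.sqrt (B.card:ℝ)), mul_assoc,
        Real.mul_self_sqrt (by positivity : (0:ℝ) ≤ (A.card:ℝ))]
      ring
    · rw [bip_nb0 G A B hAB hadj hvA hvB]
      simp [hvA, hvB]

end Bip

/-- Sufficiency part of the extremal characterization: if `G` has at least one edge and
either `ω(G) > 2` and `G` is a regular complete `ω(G)`-partite graph plus isolated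
vertices, or `ω(G) = 2` and `G` is a complete bipartite graph plus isolated vertices
(regular when `r` is odd), then equality holds in the localized walk inequality. -/
theorem extremal_sufficiency
    {V : Type*} [Fintype V] [DecidableEq V] (G : SimpleGraph V) [DecidableRel G.Adj]
    (hedge : ∃ u v, G.Adj u v) (r : ℕ) (hr : 1 ≤ r)
    (h : (2 < cliqueNumber G ∧
            IsRegularCompleteMultipartitePlusIsolated G (cliqueNumber G)) ∨
         (cliqueNumber G = 2 ∧
            ∃ A B : Finset V, IsCompleteBipartitePlusIsolated G A B ∧
              (Odd r → A.card = B.card))) :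
    lam1 (G.adjMatrix ℝ) ^ r =
      ∑ v : V, walkCount G r v *
        (((localCliqueNum G v : ℝ) - 1) / (localCliqueNum G v : ℝ)) := by
  have hr1 : r - 1 + 1 = r := by omega
  have hadjnn : ∀ i j : V, 0 ≤ (G.adjMatrix ℝ) i j := by
    intro i j
    rw [SimpleGraph.adjMatrix_apply]
    split <;> norm_num
  rcases h with ⟨hk2, W, t, f, ht, -, hadj, hcard⟩ | ⟨hcl2, A, B, ⟨hA, hB, hAB, hadj⟩, hreg⟩
  · -- multipartite case
    have hk1 : 1 ≤ cliqueNumber G := by omega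
    have hk0 : (cliqueNumber G : ℝ) ≠ 0 := Nat.cast_ne_zero.mpr (by omega)
    have hk1R : (1:ℝ) ≤ (cliqueNumber G : ℝ) := by exact_mod_cast hk1
    set d : ℝ := ((cliqueNumber G : ℝ) - 1) * t with hd
    have hd0 : 0 ≤ d := mul_nonneg (by linarith) (Nat.cast_nonneg t)
    have hwalk := multi_walk G W t f hadj hcard hk1
    have hspec : lam1 (G.adjMatrix ℝ) = d := by
      refine IsGreatest.csSup_eq ⟨?_, ?_⟩
      · rw [spectrum_iff']
        refine ⟨fun v => if v ∈ W then (1:ℝ) else 0, ?_,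
          multi_eigen G W t f hadj hcard hk1⟩
        obtain ⟨u, w, huw⟩ := hedge
        have huW : u ∈ W := ((hadj u w).mp huw).1
        intro h0
        have := congrFun h0 u
        simp [huW] at this
      · rintro ν hν
        rw [spectrum_iff'] at hν
        obtain ⟨y, hy, hνy⟩ := hν
        have hrows : ∀ i, ∑ j, (G.adjMatrix ℝ) i j ≤ d := by
          intro i
          have h1 : ∑ j, (G.adjMatrix ℝ) i j
              = ((G.adjMatrix ℝ) ^ 1).mulVec (fun _ => 1) i := by
            simp [Matrix.mulVec, dotProduct]
          rw [h1, hwalk 1]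
          by_cases hi : i ∈ W <;> simp [hi, hd0, hd.symm.le]
        have habs := eig_abs_le (G.adjMatrix ℝ) d hadjnn hrows hy hνy
        exact (le_abs_self ν).trans habs
    have hlocW : ∀ v ∈ W, localCliqueNum G v = cliqueNumber G := by
      intro v hv
      refine le_antisymm (local_le_clique G v) ?_
      obtain ⟨s, hs, hvs⟩ := multi_clique G W t f hadj hcard ht hv
      exact local_ge G hs hvs
    have hsum : ∀ v : V, walkCount G r v *
        (((localCliqueNum G v : ℝ) - 1) / (localCliqueNum G v : ℝ))
        = if v ∈ W then d ^ (r-1) * (((cliqueNumber G : ℝ) - 1) / (cliqueNumber G : ℝ))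
          else 0 := by
      intro v
      by_cases hv : v ∈ W
      · have hw : walkCount G r v = d ^ (r-1) := by
          unfold walkCount
          rw [hwalk (r-1)]
          simp [hv, hd]
        rw [hw, hlocW v hv, if_pos hv]
      · have hiso : ∀ u, ¬ G.Adj v u := fun u ha => hv ((hadj v u).mp ha).1
        rw [local_isolated G hiso, if_neg hv]
        norm_num
    rw [Finset.sum_congr rfl (fun v _ => hsum v), Finset.sum_ite_mem, Finset.univ_inter,
      Finset.sum_const, nsmul_eq_mul, hspec, multi_W_card G W t f hadj hcard]
    have hdr : d ^ r = d ^ (r-1) * d := by rw [← pow_succ, hr1]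
    rw [hdr, hd]
    push_cast
    field_simp
  · -- bipartite case
    have ha0 : (0:ℝ) < A.card := by exact_mod_cast Finset.card_pos.mpr hA
    have hb0 : (0:ℝ) < B.card := by exact_mod_cast Finset.card_pos.mpr hB
    set μ : ℝ := Real.sqrt ((A.card : ℝ) * B.card) with hμ
    have hwalk := bip_walk G A B hAB hadj
    have hspec : lam1 (G.adjMatrix ℝ) = μ := by
      refine IsGreatest.csSup_eq ⟨?_, ?_⟩
      · rw [spectrum_iff']
        refine ⟨_, ?_, bip_eigen G A B hAB hadj⟩
        obtain ⟨a, haA⟩ := hA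
        intro h0
        have := congrFun h0 a
        simp only [haA, if_true, Pi.zero_apply] at this
        exact absurd this (ne_of_gt (Real.sqrt_pos.mpr hb0))
      · rintro ν hν
        rw [spectrum_iff'] at hν
        obtain ⟨y, hy, hνy⟩ := hν
        have h2 : ((G.adjMatrix ℝ) ^ 2).mulVec y = (ν * ν) • y := by
          rw [pow_two, ← Matrix.mulVec_mulVec, hνy, Matrix.mulVec_smul, hνy, smul_smul]
        have hnn2 : ∀ i j : V, 0 ≤ ((G.adjMatrix ℝ) ^ 2) i j := by
          intro i j
          rw [pow_two, Matrix.mul_apply]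
          exact Finset.sum_nonneg fun l _ => mul_nonneg (hadjnn i l) (hadjnn l j)
        have hrows : ∀ i, ∑ j, ((G.adjMatrix ℝ) ^ 2) i j ≤ (A.card : ℝ) * B.card := by
          intro i
          have h1 : ∑ j, ((G.adjMatrix ℝ) ^ 2) i j
              = ((G.adjMatrix ℝ) ^ 2).mulVec (fun _ => 1) i := by
            simp [Matrix.mulVec, dotProduct]
          rw [h1, hwalk 2]
          norm_num
          by_cases hiA : i ∈ A
          · simp [hiA]
          · by_cases hiB : i ∈ B <;> simp [hiA, hiB, le_of_lt (mul_pos ha0 hb0)]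
        have habs := eig_abs_le _ _ hnn2 hrows hy h2
        have hν2 : ν ^ 2 ≤ (A.card : ℝ) * B.card := by
          have := abs_mul_self ν
          nlinarith [abs_nonneg (ν * ν)]
        exact (le_abs_self ν).trans (Real.abs_le_sqrt hν2)
    have hlocAB : ∀ v : V, (v ∈ A ∨ v ∈ B) → localCliqueNum G v = 2 := by
      intro v hv
      refine le_antisymm (hcl2 ▸ local_le_clique G v) ?_
      rcases hv with hvA | hvB
      · obtain ⟨b, hbB⟩ := hB
        have hvadj : G.Adj v b := (hadj v b).mpr (Or.inl ⟨hvA, hbB⟩)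
        have h1 : G.IsNClique 1 {b} := ⟨by simp [SimpleGraph.isClique_singleton], by simp⟩
        have h2 : G.IsNClique 2 (insert v {b}) := h1.insert (by simpa using hvadj)
        exact local_ge G h2 (Finset.mem_insert_self v {b})
      · obtain ⟨a, haA⟩ := hA
        have hvadj : G.Adj v a := (hadj v a).mpr (Or.inr ⟨hvB, haA⟩)
        have h1 : G.IsNClique 1 {a} := ⟨by simp [SimpleGraph.isClique_singleton], by simp⟩
        have h2 : G.IsNClique 2 (insert v {a}) := h1.insert (by simpa using hvadj)
        exact local_ge G h2 (Finset.mem_insert_self v {a})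
    have hsum : ∀ v : V, walkCount G r v *
        (((localCliqueNum G v : ℝ) - 1) / (localCliqueNum G v : ℝ))
        = (if v ∈ A then (A.card : ℝ) ^ ((r-1) / 2) * (B.card : ℝ) ^ ((r-1+1) / 2) / 2 else 0)
          + (if v ∈ B then (A.card : ℝ) ^ ((r-1+1) / 2) * (B.card : ℝ) ^ ((r-1) / 2) / 2
            else 0) := by
      intro v
      by_cases hvA : v ∈ A
      · have hvB : v ∉ B := Finset.disjoint_left.mp hAB hvA
        have hw : walkCount G r v
            = (A.card : ℝ) ^ ((r-1) / 2) * (B.card : ℝ) ^ ((r-1+1) / 2) := by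
          unfold walkCount
          rw [hwalk (r-1)]
          simp [hvA]
        rw [hw, hlocAB v (Or.inl hvA), if_pos hvA, if_neg hvB]
        norm_num
        ring
      · by_cases hvB : v ∈ B
        · have hw : walkCount G r v
              = (A.card : ℝ) ^ ((r-1+1) / 2) * (B.card : ℝ) ^ ((r-1) / 2) := by
            unfold walkCount
            rw [hwalk (r-1)]
            simp [hvA, hvB]
          rw [hw, hlocAB v (Or.inr hvB), if_neg hvA, if_pos hvB]
          norm_num
          ring
        · have hiso : ∀ u, ¬ G.Adj v u := by
            rintro u ha
            rcases (hadj v u).mp ha with ⟨hva, -⟩ | ⟨hvb, -⟩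
            exacts [hvA hva, hvB hvb]
          rw [local_isolated G hiso, if_neg hvA, if_neg hvB]
          norm_num
    rw [Finset.sum_congr rfl (fun v _ => hsum v), Finset.sum_add_distrib,
      Finset.sum_ite_mem, Finset.sum_ite_mem, Finset.univ_inter, Finset.univ_inter,
      Finset.sum_const, Finset.sum_const, nsmul_eq_mul, nsmul_eq_mul, hspec]
    rcases Nat.even_or_odd r with he | ho
    · obtain ⟨c, hc⟩ := he
      obtain ⟨e, rfl⟩ : ∃ e, c = e + 1 := ⟨c - 1, by omega⟩
      have e1 : (r-1) / 2 = e := by omega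
      have e2 : (r-1+1) / 2 = e + 1 := by omega
      have hμr : μ ^ r = ((A.card : ℝ) * B.card) ^ (e+1) := by
        rw [hc, ← two_mul, pow_mul, hμ, Real.sq_sqrt (by positivity)]
      rw [e1, e2, hμr]
      ring
    · have hst : (A.card : ℝ) = B.card := by exact_mod_cast hreg ho
      obtain ⟨c, hc⟩ := ho
      have e1 : (r-1) / 2 = c := by omega
      have e2 : (r-1+1) / 2 = c := by omega
      have hμt : μ = (B.card : ℝ) := by
        rw [hμ, hst, Real.sqrt_mul_self (by positivity)]
      rw [e1, e2, hμt, hst, hc]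
      ring
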